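/- (Proposition 3.) Let m > 0, M = max(1, |1 − m|), and for each i ∈ {1,…,n} let hᵢ : ℝ → ℝ be differentiable with 0 ≤ hᵢ'(s) ≤ m for all s ∈ ℝ. Let x : ℝ → ℝⁿ be differentiable with componentwise derivative xᵢ'(t) = uᵢ(t), define y(t) ∈ ℝⁿ by yᵢ(t) = hᵢ(xᵢ(t)), and define Q(t) = ½ y(t)ᵀPy(t). Then Q is differentiable, Q'(t) = Σᵢ (Py(t))ᵢ hᵢ'(xᵢ(t)) uᵢ(t), and for every t, u(t)ᵀ·proj_{S⊥}(y(t)) ≥ Q'(t) − (M/2)‖u(t)‖₂² − (M/2)‖proj_{S⊥}(y(t))‖₂². -/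

import Mathlib

open Matrix

/-- The projection matrix `P = I - (1/n) 𝟙 𝟙ᵀ` onto the orthogonal complement of
the agreement subspace `span(𝟙)`. -/
noncomputable def projP (n : ℕ) : Matrix (Fin n) (Fin n) ℝ :=
  1 - (n : ℝ)⁻¹ • Matrix.of (fun _ _ => (1 : ℝ))

lemma projP_symm (n : ℕ) (i j : Fin n) : projP n i j = projP n j i := by
  simp only [projP, Matrix.sub_apply, Matrix.smul_apply, Matrix.of_apply, smul_eq_mul, mul_one]
  congr 1
  rw [Matrix.one_apply, Matrix.one_apply]
  simp [eq_comm]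

lemma term_ineq (z u c M : ℝ) (h1 : -M ≤ c) (h2 : c ≤ M) :
    z * u * c ≤ M / 2 * (u * u) + M / 2 * (z * z) := by
  nlinarith [mul_nonneg (by linarith : (0:ℝ) ≤ M - c) (sq_nonneg (u + z)),
    mul_nonneg (by linarith : (0:ℝ) ≤ M + c) (sq_nonneg (u - z))]

/-- Proposition 3. For integrator-like agents `ẋᵢ = uᵢ`, `yᵢ = hᵢ(xᵢ)` with
differentiable monotone output maps `0 ≤ hᵢ' ≤ m`, the `S`-constrained storage
function `Q(t) = ½ y(t)ᵀ P y(t)` is differentiable with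
`Q'(t) = Σᵢ (P y(t))ᵢ hᵢ'(xᵢ(t)) uᵢ(t)`, and
`u(t)ᵀ proj_{S⊥}(y(t)) ≥ Q'(t) - (M/2)‖u(t)‖₂² - (M/2)‖proj_{S⊥}(y(t))‖₂²`,
where `M = max(1, |1 - m|)`. -/
theorem stmt_12 (n : ℕ) (hn : 1 ≤ n) (m : ℝ) (hm : 0 < m)
    (M : ℝ) (hM : M = max 1 |1 - m|)
    (h : Fin n → ℝ → ℝ) (hdiff : ∀ i, Differentiable ℝ (h i))
    (hbound : ∀ i s, 0 ≤ deriv (h i) s ∧ deriv (h i) s ≤ m)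
    (x u : ℝ → Fin n → ℝ)
    (hx : ∀ (i : Fin n) (t : ℝ), HasDerivAt (fun τ => x τ i) (u t i) t)
    (y : ℝ → Fin n → ℝ) (hy : ∀ t i, y t i = h i (x t i))
    (Q : ℝ → ℝ) (hQ : ∀ t, Q t = (1 / 2 : ℝ) * (y t ⬝ᵥ (projP n *ᵥ y t))) :
    ∀ t : ℝ,
      HasDerivAt Q (∑ i, (projP n *ᵥ y t) i * deriv (h i) (x t i) * u t i) t ∧
      u t ⬝ᵥ (projP n *ᵥ y t) ≥
        (∑ i, (projP n *ᵥ y t) i * deriv (h i) (x t i) * u t i)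
          - M / 2 * (u t ⬝ᵥ u t)
          - M / 2 * ((projP n *ᵥ y t) ⬝ᵥ (projP n *ᵥ y t)) := by
  intro t
  -- derivatives of the outputs
  have hd : ∀ i, HasDerivAt (fun τ => y τ i) (deriv (h i) (x t i) * u t i) t := by
    intro i
    have h1 : HasDerivAt (fun τ => h i (x τ i)) (deriv (h i) (x t i) * u t i) t :=
      ((hdiff i (x t i)).hasDerivAt).comp t (hx i t)
    have he : (fun τ => y τ i) = fun τ => h i (x τ i) := funext fun τ => hy τ i
    rw [he]; exact h1
  set d : Fin n → ℝ := fun i => deriv (h i) (x t i) * u t i with hdef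
  have hQeq : Q = fun τ => ∑ i, ∑ j, (1 / 2 : ℝ) * projP n i j * (y τ i * y τ j) := by
    funext τ
    rw [hQ τ]
    simp only [dotProduct, Matrix.mulVec, Finset.mul_sum]
    congr 1; funext i; congr 1; funext j; ring
  have key : HasDerivAt Q
      (∑ i, ∑ j, (1 / 2 : ℝ) * projP n i j * (d i * y t j + y t i * d j)) t := by
    rw [hQeq]
    apply HasDerivAt.fun_sum
    intro i _
    apply HasDerivAt.fun_sum
    intro j _
    exact ((hd i).mul (hd j)).const_mul _
  -- rearrange the derivative expression
  have hswap : (∑ i, ∑ j, (1 / 2 : ℝ) * projP n i j * (d i * y t j + y t i * d j))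
      = ∑ i, (projP n *ᵥ y t) i * deriv (h i) (x t i) * u t i := by
    have h1 : (∑ i, ∑ j, (1 / 2 : ℝ) * projP n i j * (d i * y t j + y t i * d j))
        = (∑ i, ∑ j, (1 / 2 : ℝ) * projP n i j * (d i * y t j))
          + ∑ i, ∑ j, (1 / 2 : ℝ) * projP n i j * (y t i * d j) := by
      rw [← Finset.sum_add_distrib]
      congr 1; funext i
      rw [← Finset.sum_add_distrib]
      congr 1; funext j; ring
    have h2 : (∑ i, ∑ j, (1 / 2 : ℝ) * projP n i j * (y t i * d j))
        = ∑ i, ∑ j, (1 / 2 : ℝ) * projP n i j * (d i * y t j) := by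
      rw [Finset.sum_comm]
      congr 1; funext i; congr 1; funext j
      rw [projP_symm n j i]; ring
    rw [h1, h2, ← Finset.sum_add_distrib]
    congr 1; funext i
    rw [← Finset.sum_add_distrib]
    simp only [Matrix.mulVec, dotProduct, Finset.sum_mul]
    congr 1; funext j
    simp only [hdef]; ring
  have hQd : HasDerivAt Q (∑ i, (projP n *ᵥ y t) i * deriv (h i) (x t i) * u t i) t := by
    rw [← hswap]; exact key
  refine ⟨hQd, ?_⟩
  -- the inequality
  have hM1 : (1 : ℝ) ≤ M := hM ▸ le_max_left _ _
  have hM2 : |1 - m| ≤ M := hM ▸ le_max_right _ _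
  have hterm : ∀ i, (projP n *ᵥ y t) i * deriv (h i) (x t i) * u t i
      - u t i * (projP n *ᵥ y t) i
      ≤ M / 2 * (u t i * u t i) + M / 2 * ((projP n *ᵥ y t) i * (projP n *ᵥ y t) i) := by
    intro i
    have hb := hbound i (x t i)
    have hc1 : -M ≤ deriv (h i) (x t i) - 1 := by
      have : (1 : ℝ) ≤ M := hM1
      linarith [hb.1]
    have hc2 : deriv (h i) (x t i) - 1 ≤ M := by
      have h3 : m - 1 ≤ |1 - m| := by
        rw [abs_sub_comm]; exact le_abs_self _
      linarith [hb.2, h3.trans hM2]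
    have := term_ineq ((projP n *ᵥ y t) i) (u t i) (deriv (h i) (x t i) - 1) M hc1 hc2
    nlinarith [this]
  have hsum : (∑ i, ((projP n *ᵥ y t) i * deriv (h i) (x t i) * u t i
      - u t i * (projP n *ᵥ y t) i))
      ≤ ∑ i, (M / 2 * (u t i * u t i) + M / 2 * ((projP n *ᵥ y t) i * (projP n *ᵥ y t) i)) :=
    Finset.sum_le_sum fun i _ => hterm i
  rw [Finset.sum_sub_distrib, Finset.sum_add_distrib, ← Finset.mul_sum, ← Finset.mul_sum] at hsum
  simp only [ge_iff_le, dotProduct]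
  linarith [hsum]
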